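/- Let f : {0,1}^k → {0,1} and 1 ≤ t ≤ k. Then f is t-null if and only if f̂(S) = 0 for all nonempty S ⊆ {1,...,k} with |S| ≤ t. -/
import Mathlib


open Finset

/-- Conditional probability `Pr[f(x) = 1 | x_S = σ]` under the uniform
distribution on `{0,1}^k`. -/
noncomputable def pCond (k : ℕ) (f : (Fin k → Bool) → Bool)
    (S : Finset (Fin k)) (σ : Fin k → Bool) : ℝ :=
  ((univ.filter fun x : Fin k → Bool => f x = true ∧ ∀ i ∈ S, x i = σ i).card : ℝ) /
    ((univ.filter fun x : Fin k → Bool => ∀ i ∈ S, x i = σ i).card : ℝ)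

/-- `f` is `t`-null: all conditional probabilities over sets of size `t` agree. -/
def IsTNull (k : ℕ) (f : (Fin k → Bool) → Bool) (t : ℕ) : Prop :=
  ∀ S S' : Finset (Fin k), S.card = t → S'.card = t →
    ∀ σ σ' : Fin k → Bool, pCond k f S σ = pCond k f S' σ'

/-- Fourier coefficient of a boolean function. -/
noncomputable def boolFourierCoeff (k : ℕ) (f : (Fin k → Bool) → Bool)
    (S : Finset (Fin k)) : ℝ :=
  (1 / 2 ^ k : ℝ) *
    ∑ x : Fin k → Bool,
      (if f x then (1 : ℝ) else 0) * (-1 : ℝ) ^ (∑ i ∈ S, if x i then 1 else 0)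

namespace TNullAux

variable {k : ℕ}

/-- Character sign `(-1)^{∑_{i∈T} x_i}` as a product. -/
noncomputable def sgn (T : Finset (Fin k)) (x : Fin k → Bool) : ℝ :=
  ∏ i ∈ T, (if x i then (-1 : ℝ) else 1)

lemma sgn_eq (T : Finset (Fin k)) (x : Fin k → Bool) :
    (-1 : ℝ) ^ (∑ i ∈ T, if x i then 1 else 0) = sgn T x := by
  rw [← Finset.prod_pow_eq_pow_sum, sgn]
  refine Finset.prod_congr rfl fun i _ => ?_
  by_cases h : x i <;> simp [h]

lemma sgn_empty (x : Fin k → Bool) : sgn (∅ : Finset (Fin k)) x = 1 := by simp [sgn]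

/-- Unnormalized Fourier coefficient. -/
noncomputable def csum (f : (Fin k → Bool) → Bool) (T : Finset (Fin k)) : ℝ :=
  ∑ x : Fin k → Bool, (if f x then (1 : ℝ) else 0) * sgn T x

lemma fourier_eq (f : (Fin k → Bool) → Bool) (T : Finset (Fin k)) :
    boolFourierCoeff k f T = csum f T / 2 ^ k := by
  rw [boolFourierCoeff, csum, one_div, div_eq_inv_mul]
  congr 1
  exact Finset.sum_congr rfl fun x _ => by rw [sgn_eq]

/-- Orthogonality of characters. -/
lemma orth (T T' : Finset (Fin k)) :
    ∑ σ : Fin k → Bool, sgn T σ * sgn T' σ = if T = T' then (2 : ℝ) ^ k else 0 := by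
  have key : ∀ σ : Fin k → Bool, sgn T σ * sgn T' σ =
      ∏ i : Fin k, ((if i ∈ T then (if σ i then (-1 : ℝ) else 1) else 1) *
        (if i ∈ T' then (if σ i then (-1 : ℝ) else 1) else 1)) := by
    intro σ
    rw [Finset.prod_mul_distrib, Fintype.prod_ite_mem, Fintype.prod_ite_mem]
    rfl
  simp only [key]
  rw [← Fintype.piFinset_univ,
    ← Finset.prod_univ_sum (fun _ : Fin k => (univ : Finset Bool))
      (fun i b => (if i ∈ T then (if b then (-1 : ℝ) else 1) else 1) *
        (if i ∈ T' then (if b then (-1 : ℝ) else 1) else 1))]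
  have factor : ∀ i : Fin k, (∑ b : Bool, ((if i ∈ T then (if b then (-1 : ℝ) else 1) else 1) *
      (if i ∈ T' then (if b then (-1 : ℝ) else 1) else 1))) =
      if (i ∈ T ↔ i ∈ T') then 2 else 0 := by
    intro i
    by_cases h1 : i ∈ T <;> by_cases h2 : i ∈ T' <;> simp [h1, h2] <;> norm_num
  rw [Finset.prod_congr rfl fun i _ => factor i]
  by_cases h : T = T'
  · subst h
    rw [if_pos rfl]
    have : ∀ i : Fin k, (if (i ∈ T ↔ i ∈ T) then (2:ℝ) else 0) = 2 := fun i => if_pos Iff.rfl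
    rw [Finset.prod_congr rfl fun i _ => this i, Finset.prod_const, Finset.card_univ,
      Fintype.card_fin]
  · rw [if_neg h]
    have : ∃ i : Fin k, ¬(i ∈ T ↔ i ∈ T') := by
      by_contra hc
      push_neg at hc
      exact h (Finset.ext fun i => (hc i))
    obtain ⟨i, hi⟩ := this
    exact Finset.prod_eq_zero (Finset.mem_univ i) (by rw [if_neg hi])

lemma orth_empty (T : Finset (Fin k)) :
    ∑ σ : Fin k → Bool, sgn T σ = if T = ∅ then (2 : ℝ) ^ k else 0 := by
  have := orth T (∅ : Finset (Fin k))
  simpa [sgn_empty] using this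

/-- Expansion of the indicator of agreement on `S`. -/
lemma indicator_expand (S : Finset (Fin k)) (x σ : Fin k → Bool) :
    (if (∀ i ∈ S, x i = σ i) then (1 : ℝ) else 0) * 2 ^ S.card =
      ∑ T ∈ S.powerset, sgn T x * sgn T σ := by
  have h1 : ∀ T ∈ S.powerset, sgn T x * sgn T σ =
      (∏ i ∈ T, ((if x i then (-1 : ℝ) else 1) * (if σ i then (-1 : ℝ) else 1))) *
        ∏ i ∈ S \ T, (1:ℝ) := by
    intro T _
    rw [Finset.prod_mul_distrib, Finset.prod_const_one, mul_one]; rfl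
  rw [Finset.sum_congr rfl h1, ← Finset.prod_add]
  have h2 : ∀ i ∈ S, ((if x i then (-1 : ℝ) else 1) * (if σ i then (-1 : ℝ) else 1) + 1) =
      2 * (if x i = σ i then (1 : ℝ) else 0) := by
    intro i _
    by_cases hx : x i <;> by_cases hσ : σ i <;> simp [hx, hσ] <;> norm_num
  rw [Finset.prod_congr rfl h2, Finset.prod_mul_distrib, Finset.prod_const, Finset.prod_boole]
  by_cases h : ∀ i ∈ S, x i = σ i <;> simp [h, mul_comm]

lemma num_eq (f : (Fin k → Bool) → Bool) (S : Finset (Fin k)) (σ : Fin k → Bool) :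
    ((univ.filter fun x : Fin k → Bool => f x = true ∧ ∀ i ∈ S, x i = σ i).card : ℝ) * 2 ^ S.card
      = ∑ T ∈ S.powerset, sgn T σ * csum f T := by
  rw [Finset.card_filter]
  push_cast
  rw [Finset.sum_mul]
  have h1 : ∀ x : Fin k → Bool,
      (if f x = true ∧ ∀ i ∈ S, x i = σ i then (1 : ℝ) else 0) * 2 ^ S.card =
      ∑ T ∈ S.powerset, (if f x then (1 : ℝ) else 0) * (sgn T x * sgn T σ) := by
    intro x
    rw [← Finset.mul_sum, ← indicator_expand S x σ, ite_and, ← mul_assoc]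
    by_cases hf : f x <;> simp [hf]
  rw [Finset.sum_congr rfl fun x _ => h1 x, Finset.sum_comm]
  refine Finset.sum_congr rfl fun T _ => ?_
  rw [csum, Finset.mul_sum]
  refine Finset.sum_congr rfl fun x _ => by ring

lemma den_eq (S : Finset (Fin k)) (σ : Fin k → Bool) :
    ((univ.filter fun x : Fin k → Bool => ∀ i ∈ S, x i = σ i).card : ℝ) * 2 ^ S.card
      = 2 ^ k := by
  rw [Finset.card_filter]
  push_cast
  rw [Finset.sum_mul]
  rw [Finset.sum_congr rfl fun x _ => indicator_expand S x σ, Finset.sum_comm]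
  have h2 : ∀ T ∈ S.powerset, (∑ x : Fin k → Bool, sgn T x * sgn T σ) =
      (if T = ∅ then (2:ℝ)^k else 0) * sgn T σ := by
    intro T _
    rw [← Finset.sum_mul, orth_empty]
  rw [Finset.sum_congr rfl h2]
  have h3 : ∀ T ∈ S.powerset, (if T = ∅ then (2:ℝ)^k else 0) * sgn T σ =
      if T = ∅ then (2:ℝ)^k * sgn T σ else 0 := by
    intro T _
    by_cases hT : T = ∅ <;> simp [hT]
  rw [Finset.sum_congr rfl h3, Finset.sum_ite_eq' S.powerset ∅
      (fun T => (2:ℝ)^k * sgn T σ), if_pos (by simp)]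
  simp [sgn_empty]

lemma pCond_eq (f : (Fin k → Bool) → Bool) (S : Finset (Fin k)) (σ : Fin k → Bool) :
    pCond k f S σ = (∑ T ∈ S.powerset, sgn T σ * csum f T) / 2 ^ k := by
  have hs : ((2 : ℝ) ^ S.card) ≠ 0 := by positivity
  have hn := num_eq f S σ
  have hd := den_eq S σ
  rw [pCond, ← hn, ← hd, mul_comm _ ((2:ℝ)^S.card), mul_comm _ ((2:ℝ)^S.card),
    mul_div_mul_left _ _ hs]

end TNullAux

open TNullAux in
theorem tNull_iff_fourier_vanish (k t : ℕ) (f : (Fin k → Bool) → Bool)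
    (ht1 : 1 ≤ t) (htk : t ≤ k) :
    IsTNull k f t ↔
      ∀ S : Finset (Fin k), S ≠ ∅ → S.card ≤ t → boolFourierCoeff k f S = 0 := by
  have h2k : ((2 : ℝ) ^ k) ≠ 0 := by positivity
  constructor
  · intro hnull T₀ hT₀ne hT₀card
    obtain ⟨S, hT₀S, hScard⟩ := Finset.exists_superset_card_eq hT₀card
      (by rw [Fintype.card_fin]; exact htk)
    have hconst : ∀ σ : Fin k → Bool,
        (∑ T ∈ S.powerset, sgn T σ * csum f T) =
        (∑ T ∈ S.powerset, sgn T (fun _ => false) * csum f T) := by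
      intro σ
      have h := hnull S S hScard hScard σ (fun _ => false)
      rw [pCond_eq, pCond_eq] at h
      exact mul_right_cancel₀ (inv_ne_zero h2k) (by simpa [div_eq_mul_inv] using h)
    have key : ∑ σ : Fin k → Bool, sgn T₀ σ * (∑ T ∈ S.powerset, sgn T σ * csum f T)
        = 2 ^ k * csum f T₀ := by
      have swap : ∀ σ : Fin k → Bool, sgn T₀ σ * (∑ T ∈ S.powerset, sgn T σ * csum f T) =
          ∑ T ∈ S.powerset, (sgn T₀ σ * sgn T σ) * csum f T := by
        intro σ; rw [Finset.mul_sum]; exact Finset.sum_congr rfl fun T _ => by ring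
      rw [Finset.sum_congr rfl fun σ _ => swap σ, Finset.sum_comm]
      have h3 : ∀ T ∈ S.powerset, (∑ σ : Fin k → Bool, (sgn T₀ σ * sgn T σ) * csum f T) =
          if T₀ = T then (2:ℝ)^k * csum f T else 0 := by
        intro T _
        rw [← Finset.sum_mul, orth]
        by_cases h : T₀ = T <;> simp [h]
      rw [Finset.sum_congr rfl h3, Finset.sum_ite_eq S.powerset T₀
        (fun T => (2:ℝ)^k * csum f T), if_pos (Finset.mem_powerset.mpr hT₀S)]
    have zero : ∑ σ : Fin k → Bool, sgn T₀ σ * (∑ T ∈ S.powerset, sgn T σ * csum f T) = 0 := by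
      rw [Finset.sum_congr rfl fun σ _ => by rw [hconst σ], ← Finset.sum_mul, orth_empty,
        if_neg hT₀ne, zero_mul]
    rw [zero] at key
    rw [fourier_eq]
    rw [eq_comm, mul_eq_zero] at key
    rcases key with h | h
    · exact absurd h h2k
    · rw [h, zero_div]
  · intro hvan S S' hS hS' σ σ'
    have hval : ∀ (S : Finset (Fin k)), S.card = t → ∀ σ : Fin k → Bool,
        pCond k f S σ = csum f ∅ / 2 ^ k := by
      intro S hS σ
      rw [pCond_eq]
      congr 1
      have h1 : ∀ T ∈ S.powerset, sgn T σ * csum f T =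
          if T = ∅ then csum f ∅ else 0 := by
        intro T hT
        by_cases hTe : T = ∅
        · subst hTe; simp [sgn_empty]
        · rw [if_neg hTe]
          have hz : boolFourierCoeff k f T = 0 :=
            hvan T hTe (le_trans (Finset.card_le_card (Finset.mem_powerset.mp hT)) (le_of_eq hS))
          rw [fourier_eq, div_eq_zero_iff] at hz
          rcases hz with h | h
          · rw [h, mul_zero]
          · exact absurd h h2k
      rw [Finset.sum_congr rfl h1, Finset.sum_ite_eq' S.powerset ∅ (fun _ => csum f ∅),
        if_pos (by simp)]
    rw [hval S hS σ, hval S' hS' σ']
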